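/- For any finite group G and any divisor k of |G|, the cardinality of the set L_k(G) = {x ∈ G : x^k = 1} is divisible by k. -/

import Mathlib

open Finset Subgroup

universe u

private lemma frob_ncard_filter {G : Type u} [Fintype G] (p : G → Prop) [DecidablePred p] :
    Nat.card {x : G // p x} = (Finset.univ.filter p).card := by
  rw [Nat.card_eq_fintype_card, Fintype.card_subtype]

private lemma frob_exists_modinv {A B : ℕ} (h : Nat.Coprime B A) : ∃ b, B * b ≡ 1 [MOD A] := by
  rcases Nat.lt_or_ge A 2 with hA | hA
  · interval_cases A
    · refine ⟨1, ?_⟩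
      have hB : B = 1 := by simpa [Nat.Coprime] using h
      simp [hB, Nat.ModEq]
    · exact ⟨1, Nat.modEq_one⟩
  · obtain ⟨b, -, hb⟩ := Nat.exists_mul_mod_eq_one_of_coprime h (by omega)
    refine ⟨b, ?_⟩
    have h1 : 1 % A = 1 := Nat.mod_eq_of_lt (by omega)
    rw [Nat.ModEq, h1, hb]

private lemma frob_subgroup_eq_of_le_of_card {G : Type u} [Group G] [Fintype G]
    {H K : Subgroup G} (h : H ≤ K) (hc : Nat.card K ≤ Nat.card H) : H = K := by
  apply SetLike.ext'
  apply Set.eq_of_subset_of_ncard_le h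
  rw [← Nat.card_coe_set_eq, ← Nat.card_coe_set_eq]
  exact hc

private lemma frob_conj_pow {G : Type u} [Group G] (g y : G) (n : ℕ) :
    (g * y * g⁻¹) ^ n = g * y ^ n * g⁻¹ := by
  induction n with
  | zero => simp
  | succ n ihn => rw [pow_succ, pow_succ, ihn]; group

-- the decomposition identity : #{x : x^(A*B)=1} = Σ_{y^B = 1} #{u : commutes with y, u^A = 1}
private lemma frob_card_decomp {G : Type u} [Group G] [Fintype G] [DecidableEq G]
    (A B : ℕ) (hAB : Nat.Coprime A B) :
    (univ.filter fun x : G => x ^ (A * B) = 1).card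
      = ∑ y ∈ univ.filter (fun y : G => y ^ B = 1),
          (univ.filter fun u : G => u * y = y * u ∧ u ^ A = 1).card := by
  obtain ⟨b, hb⟩ := frob_exists_modinv hAB.symm
  rw [← Finset.card_sigma]
  apply Finset.card_bij' (i := fun (x : G) _ => (⟨x * (x ^ (B * b))⁻¹, x ^ (B * b)⟩ : (_ : G) × G))
      (j := fun q _ => q.2 * q.1)
  -- i maps into the sigma set
  · intro x hx
    have hx1 : x ^ (A * B) = 1 := (mem_filter.mp hx).2
    have hordx : orderOf x ∣ A * B := orderOf_dvd_iff_pow_eq_one.mpr hx1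
    rw [Finset.mem_sigma]
    constructor
    · -- y-component : (x * (x^(B*b))⁻¹) ^ B = 1
      rw [mem_filter]
      refine ⟨mem_univ _, ?_⟩
      have hcomm : Commute x (x ^ (B * b))⁻¹ := (Commute.pow_right (Commute.refl x) _).inv_right
      rw [hcomm.mul_pow, inv_pow, ← pow_mul]
      have hmod : B * b * B ≡ 1 * B [MOD A * B] := Nat.ModEq.mul_right' (c := B) hb
      have hxx : x ^ (B * b * B) = x ^ B := by
        rw [pow_eq_pow_iff_modEq]
        calc B * b * B ≡ 1 * B [MOD orderOf x] := hmod.of_dvd hordx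
          _ = B := one_mul B
      rw [hxx]
      simp
    · -- u-component : commutes and u^A = 1
      rw [mem_filter]
      refine ⟨mem_univ _, ?_, ?_⟩
      · exact (((Commute.refl x).pow_left _).mul_right
          ((Commute.refl (x ^ (B * b))).inv_right)).eq
      · rw [← pow_mul, show B * b * A = A * B * b by ring, pow_mul, hx1, one_pow]
  -- j maps into the filter set
  · intro q hq
    rw [Finset.mem_sigma] at hq
    obtain ⟨hqy, hqu⟩ := hq
    have hy : q.1 ^ B = 1 := (mem_filter.mp hqy).2
    obtain ⟨hcomm, hu⟩ := (mem_filter.mp hqu).2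
    rw [mem_filter]
    refine ⟨mem_univ _, ?_⟩
    have hc : Commute q.2 q.1 := hcomm
    rw [hc.mul_pow, pow_mul, hu, one_pow, one_mul, mul_comm A B, pow_mul, hy, one_pow]
  -- left inverse : j (i x) = x
  · intro x hx
    have hcomm : Commute (x ^ (B * b)) x := (Commute.refl x).pow_left _
    show x ^ (B * b) * (x * (x ^ (B * b))⁻¹) = x
    rw [← mul_assoc, hcomm.eq, mul_assoc]
    simp
  -- right inverse : i (j q) = q
  · intro q hq
    rw [Finset.mem_sigma] at hq
    obtain ⟨hqy, hqu⟩ := hq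
    have hy : q.1 ^ B = 1 := (mem_filter.mp hqy).2
    obtain ⟨hcomm, hu⟩ := (mem_filter.mp hqu).2
    have hc : Commute q.2 q.1 := hcomm
    have he : (q.2 * q.1) ^ (B * b) = q.2 := by
      rw [hc.mul_pow]
      have h1 : q.1 ^ (B * b) = 1 := by rw [pow_mul, hy, one_pow]
      have h2 : q.2 ^ (B * b) = q.2 := by
        nth_rewrite 2 [← pow_one q.2]
        rw [pow_eq_pow_iff_modEq]
        exact hb.of_dvd (orderOf_dvd_iff_pow_eq_one.mpr hu)
      rw [h1, h2, mul_one]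
    have hfst : q.2 * q.1 * q.2⁻¹ = q.1 := by rw [hc.eq]; simp
    obtain ⟨y, u⟩ := q
    simp only at he hfst ⊢
    rw [he, hfst]

-- size of a conjugacy class equals the index of the centralizer
private lemma frob_card_filter_isConj {G : Type u} [Group G] [Fintype G] (y₀ : G)
    [DecidablePred (fun y => IsConj y₀ y)] :
    (univ.filter fun y => IsConj y₀ y).card = (Subgroup.centralizer {y₀}).index := by
  classical
  have h1 : (univ.filter fun y => IsConj y₀ y).card
      = Nat.card (MulAction.orbit (ConjAct G) y₀) := by
    rw [← Fintype.card_subtype, ← Nat.card_eq_fintype_card]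
    apply Nat.card_congr
    exact Equiv.subtypeEquivRight (fun y => by
      rw [ConjAct.mem_orbit_conjAct, isConj_comm])
  have h2 : Nat.card (MulAction.orbit (ConjAct G) y₀)
      * Nat.card (MulAction.stabilizer (ConjAct G) y₀) = Nat.card G := by
    have := MulAction.card_orbit_mul_card_stabilizer_eq_card_group (ConjAct G) y₀
    simp only [← Nat.card_eq_fintype_card] at this
    rw [this]
    exact Nat.card_congr (ConjAct.toConjAct (G := G)).toEquiv.symm
  have h3 : Nat.card (Subgroup.centralizer {y₀} : Subgroup G)
      = Nat.card (MulAction.stabilizer (ConjAct G) y₀) := by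
    apply Nat.card_congr
    refine (ConjAct.toConjAct (G := G)).toEquiv.subtypeEquiv (fun g => ?_)
    rw [Subgroup.centralizer_eq_comap_stabilizer]
    rfl
  have h4 := Subgroup.index_mul_card (Subgroup.centralizer {y₀} : Subgroup G)
  have hpos : 0 < Nat.card (Subgroup.centralizer {y₀} : Subgroup G) := Nat.card_pos
  rw [h1]
  apply Nat.eq_of_mul_eq_mul_right hpos
  rw [h4, h3, h2]

-- summing a conjugation-invariant function over a conjugation-closed set
private lemma frob_dvd_sum_orbits {G : Type u} [Group G] [Fintype G] (D : ℕ)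
    (f : G → ℕ) (hf : ∀ g y, f (g * y * g⁻¹) = f y) (S : Finset G)
    (hS : ∀ g y, y ∈ S → g * y * g⁻¹ ∈ S)
    (hterm : ∀ y ∈ S, D ∣ (Subgroup.centralizer {y}).index * f y) :
    D ∣ ∑ y ∈ S, f y := by
  classical
  induction S using Finset.strongInduction with
  | _ S ih =>
    rcases S.eq_empty_or_nonempty with rfl | ⟨y₀, hy₀⟩
    · simp
    · rw [← Finset.sum_filter_add_sum_filter_not S (fun y => IsConj y₀ y) f]
      have hsub : univ.filter (fun y => IsConj y₀ y) ⊆ S := by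
        intro y hy
        obtain ⟨c, hc⟩ := isConj_iff.mp (mem_filter.mp hy).2
        exact hc ▸ hS c y₀ hy₀
      have hclass : S.filter (fun y => IsConj y₀ y) = univ.filter (fun y => IsConj y₀ y) :=
        Finset.Subset.antisymm
          (fun y hy => mem_filter.mpr ⟨mem_univ _, (mem_filter.mp hy).2⟩)
          (fun y hy => mem_filter.mpr ⟨hsub hy, (mem_filter.mp hy).2⟩)
      apply Nat.dvd_add
      · have hconst : ∀ y ∈ S.filter (fun y => IsConj y₀ y), f y = f y₀ := by
          intro y hy
          obtain ⟨c, hc⟩ := isConj_iff.mp (mem_filter.mp hy).2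
          rw [← hc, hf]
        rw [Finset.sum_congr rfl hconst, Finset.sum_const, smul_eq_mul, hclass,
          frob_card_filter_isConj]
        exact hterm y₀ hy₀
      · have hss : S.filter (fun y => ¬ IsConj y₀ y) ⊂ S := by
          refine Finset.ssubset_iff_of_subset (Finset.filter_subset _ _) |>.mpr ?_
          exact ⟨y₀, hy₀, by simp; exact fun _ => ⟨1, by group⟩⟩
        refine ih _ hss (fun g y hy => ?_) (fun y hy => hterm y (Finset.filter_subset _ _ hy))
        rw [mem_filter] at hy ⊢
        refine ⟨hS g y hy.1, fun hcon => hy.2 ?_⟩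
        exact hcon.trans (isConj_iff.mpr ⟨g⁻¹, by group⟩)

-- conjugation invariance of the inner count
private lemma frob_card_comm_conj {G : Type u} [Group G] [Fintype G] [DecidableEq G]
    (g y : G) (n : ℕ) :
    (univ.filter fun u : G => u * (g * y * g⁻¹) = (g * y * g⁻¹) * u ∧ u ^ n = 1).card
      = (univ.filter fun u : G => u * y = y * u ∧ u ^ n = 1).card := by
  apply Finset.card_bij' (i := fun u _ => g⁻¹ * u * g) (j := fun u _ => g * u * g⁻¹)
  · intro u hu
    obtain ⟨hc, hp⟩ := (mem_filter.mp hu).2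
    rw [mem_filter]
    refine ⟨mem_univ _, ?_, ?_⟩
    · calc g⁻¹ * u * g * y = g⁻¹ * (u * (g * y * g⁻¹)) * g := by group
        _ = g⁻¹ * (g * y * g⁻¹ * u) * g := by rw [hc]
        _ = y * (g⁻¹ * u * g) := by group
    · have hgu : g⁻¹ * u * g = g⁻¹ * u * g⁻¹⁻¹ := by group
      rw [hgu, frob_conj_pow, hp]
      group
  · intro u hu
    obtain ⟨hc, hp⟩ := (mem_filter.mp hu).2
    rw [mem_filter]
    refine ⟨mem_univ _, ?_, ?_⟩
    · calc g * u * g⁻¹ * (g * y * g⁻¹) = g * (u * y) * g⁻¹ := by group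
        _ = g * (y * u) * g⁻¹ := by rw [hc]
        _ = g * y * g⁻¹ * (g * u * g⁻¹) := by group
    · rw [frob_conj_pow, hp]; group
  · intro u _; group
  · intro u _; group

-- transfer the count to the centralizer subgroup
private lemma frob_card_comm_subgroup {G : Type u} [Group G] [Fintype G] [DecidableEq G]
    (y : G) (n : ℕ) :
    (univ.filter fun u : G => u * y = y * u ∧ u ^ n = 1).card
      = Nat.card {u : ↥(Subgroup.centralizer {y}) // u ^ n = 1} := by
  classical
  rw [← frob_ncard_filter]
  apply Nat.card_congr
  refine ⟨fun u => ⟨⟨u.1, Subgroup.mem_centralizer_iff.mpr ?_⟩, ?_⟩,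
    fun c => ⟨c.1.1, ?_, ?_⟩, fun u => rfl, fun c => rfl⟩
  · intro h hh
    rw [Set.mem_singleton_iff.mp hh]
    exact u.2.1.symm
  · exact Subtype.ext (by simpa using u.2.2)
  · exact (Subgroup.mem_centralizer_iff.mp c.1.2 y rfl).symm
  · simpa using congrArg Subtype.val c.2

-- capping the exponent by the p-valuation of the group order
private lemma frob_filter_cap {G : Type u} [Group G] [Fintype G] [DecidableEq G]
    {p : ℕ} (hp : p.Prime) (s : ℕ) :
    (univ.filter fun u : G => u ^ p ^ s = 1)
      = (univ.filter fun u : G => u ^ p ^ (min s ((Fintype.card G).factorization p)) = 1) := by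
  ext u
  simp only [mem_filter, mem_univ, true_and]
  constructor
  · intro h
    obtain ⟨i, his, hi⟩ := (Nat.dvd_prime_pow hp).mp (orderOf_dvd_iff_pow_eq_one.mpr h)
    have hic : i ≤ (Fintype.card G).factorization p :=
      (hp.pow_dvd_iff_le_factorization Fintype.card_ne_zero).mp (hi ▸ orderOf_dvd_card)
    exact orderOf_dvd_iff_pow_eq_one.mp (hi ▸ pow_dvd_pow p (le_min his hic))
  · intro h
    exact orderOf_dvd_iff_pow_eq_one.mp
      ((orderOf_dvd_iff_pow_eq_one.mpr h).trans (pow_dvd_pow p (min_le_left _ _)))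

-- number of generators of a cyclic subgroup
private lemma frob_card_zpowers_eq {G : Type u} [Group G] [Fintype G]
    (x₀ : G) :
    Nat.card {x : G // Subgroup.zpowers x = Subgroup.zpowers x₀}
      = (orderOf x₀).totient := by
  classical
  rw [frob_ncard_filter]
  haveI : IsCyclic ↥(Subgroup.zpowers x₀) :=
    ⟨⟨⟨x₀, Subgroup.mem_zpowers x₀⟩, fun c => by
      obtain ⟨k, hk⟩ := Subgroup.mem_zpowers_iff.mp c.2
      exact ⟨k, Subtype.ext (by simpa using hk)⟩⟩⟩
  have hcard : Fintype.card ↥(Subgroup.zpowers x₀) = orderOf x₀ := by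
    rw [← Nat.card_eq_fintype_card, Nat.card_zpowers]
  rw [← hcard, ← IsCyclic.card_orderOf_eq_totient (dvd_refl _)]
  have horder : ∀ x : G, Subgroup.zpowers x = Subgroup.zpowers x₀ → orderOf x = orderOf x₀ := by
    intro x hx
    rw [← Nat.card_zpowers, ← Nat.card_zpowers, hx]
  apply Finset.card_bij' (i := fun x hx => (⟨x, by
      rw [← (mem_filter.mp hx).2]; exact Subgroup.mem_zpowers x⟩ : ↥(Subgroup.zpowers x₀)))
    (j := fun c _ => (c : G))
  case left_inv => intro x _; rfl
  case right_inv => intro c _; rfl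
  case hi =>
    intro x hx
    rw [mem_filter]
    refine ⟨mem_univ _, ?_⟩
    have h1 := orderOf_injective (Subgroup.zpowers x₀).subtype (Subgroup.subtype_injective _)
      (⟨x, by rw [← (mem_filter.mp hx).2]; exact Subgroup.mem_zpowers x⟩ : ↥(Subgroup.zpowers x₀))
    simp only [Subgroup.coe_subtype] at h1
    rw [← h1, hcard]
    exact horder x (mem_filter.mp hx).2
  case hj =>
    intro c hc
    rw [mem_filter]
    refine ⟨mem_univ _, ?_⟩
    have hord : orderOf (c : G) = orderOf x₀ := by
      have h1 := orderOf_injective (Subgroup.zpowers x₀).subtype (Subgroup.subtype_injective _) c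
      simp only [Subgroup.coe_subtype] at h1
      rw [h1, (mem_filter.mp hc).2, hcard]
    apply frob_subgroup_eq_of_le_of_card (Subgroup.zpowers_le.mpr c.2)
    rw [Nat.card_zpowers, Nat.card_zpowers, hord]

-- counting elements of order p^b with a < b : divisible by p^a
private lemma frob_PPstep {G : Type u} [Group G] [Fintype G] [DecidableEq G]
    {p : ℕ} (hp : p.Prime) {a b : ℕ} (hab : a ≤ b) :
    p ^ a ∣ (univ.filter fun x : G => x ^ p ^ b = 1 ∧ ¬ x ^ p ^ a = 1).card := by
  classical
  set S := univ.filter fun x : G => x ^ p ^ b = 1 ∧ ¬ x ^ p ^ a = 1 with hS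
  rw [Finset.card_eq_sum_card_fiberwise
    (f := fun x : G => Subgroup.zpowers x) (t := S.image fun x => Subgroup.zpowers x)
    (fun x hx => Finset.mem_image_of_mem _ hx)]
  refine Finset.dvd_sum ?_
  intro C hC
  obtain ⟨x₀, hx₀, hCx₀⟩ := Finset.mem_image.mp hC
  have hx₀1 : x₀ ^ p ^ b = 1 := (mem_filter.mp hx₀).2.1
  have hx₀2 : ¬ x₀ ^ p ^ a = 1 := (mem_filter.mp hx₀).2.2
  obtain ⟨b₀, hb₀b, hord⟩ := (Nat.dvd_prime_pow hp).mp (orderOf_dvd_iff_pow_eq_one.mpr hx₀1)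
  have hab₀ : a < b₀ := by
    by_contra hle
    push_neg at hle
    exact hx₀2 (orderOf_dvd_iff_pow_eq_one.mp (hord ▸ pow_dvd_pow p hle))
  have hfib : S.filter (fun x => Subgroup.zpowers x = C)
      = univ.filter (fun x => Subgroup.zpowers x = C) := by
    apply Finset.Subset.antisymm
    · intro x hx
      exact mem_filter.mpr ⟨mem_univ _, (mem_filter.mp hx).2⟩
    · intro x hx
      have hzp : Subgroup.zpowers x = Subgroup.zpowers x₀ := (mem_filter.mp hx).2.trans hCx₀.symm
      have hordx : orderOf x = orderOf x₀ := by
        rw [← Nat.card_zpowers, ← Nat.card_zpowers, hzp]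
      refine mem_filter.mpr ⟨mem_filter.mpr ⟨mem_univ _, ?_, ?_⟩, (mem_filter.mp hx).2⟩
      · exact orderOf_dvd_iff_pow_eq_one.mp (by rw [hordx]; exact orderOf_dvd_iff_pow_eq_one.mpr hx₀1)
      · intro hcon
        exact hx₀2 (orderOf_dvd_iff_pow_eq_one.mp (by
          rw [← hordx]; exact orderOf_dvd_iff_pow_eq_one.mpr hcon))
  rw [hfib, ← hCx₀,
    show (univ.filter fun x : G => Subgroup.zpowers x = Subgroup.zpowers x₀).card
        = Nat.card {x : G // Subgroup.zpowers x = Subgroup.zpowers x₀} from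
      (frob_ncard_filter _).symm,
    frob_card_zpowers_eq, hord, Nat.totient_prime_pow hp (by omega : 0 < b₀)]
  exact Dvd.dvd.mul_right (pow_dvd_pow p (by omega)) _

-- reduce exponent a ≤ b case to the full exponent case
private lemma frob_PP_reduce {G : Type u} [Group G] [Fintype G] [DecidableEq G]
    {p : ℕ} (hp : p.Prime) {a b : ℕ} (hab : a ≤ b)
    (hfull : p ^ a ∣ (univ.filter fun x : G => x ^ p ^ b = 1).card) :
    p ^ a ∣ (univ.filter fun x : G => x ^ p ^ a = 1).card := by
  classical
  have hsplit : (univ.filter fun x : G => x ^ p ^ b = 1).card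
      = (univ.filter fun x : G => x ^ p ^ a = 1).card
        + (univ.filter fun x : G => x ^ p ^ b = 1 ∧ ¬ x ^ p ^ a = 1).card := by
    rw [← Finset.card_filter_add_card_filter_not
      (s := univ.filter fun x : G => x ^ p ^ b = 1) (p := fun x => x ^ p ^ a = 1)]
    congr 1
    · congr 1
      ext x
      simp only [Finset.filter_filter, mem_filter, mem_univ, true_and]
      constructor
      · exact fun h => h.2
      · intro h
        exact ⟨orderOf_dvd_iff_pow_eq_one.mp
          ((orderOf_dvd_iff_pow_eq_one.mpr h).trans (pow_dvd_pow p hab)), h⟩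
    · congr 1
      ext x
      simp [Finset.filter_filter]
  rw [hsplit] at hfull
  exact (Nat.dvd_add_right (frob_PPstep hp hab)).mp
    (by rwa [Nat.add_comm] at hfull)

-- p-valuation of the index
private lemma frob_index_pow_dvd {G : Type u} [Group G] [Fintype G]
    {p : ℕ} (hp : p.Prime) (C : Subgroup G) (α : ℕ)
    (hα : α ≤ (Nat.card G).factorization p) :
    p ^ (α - min α ((Nat.card C).factorization p)) ∣ C.index := by
  have hmul := Subgroup.index_mul_card C
  have hG0 : Nat.card G ≠ 0 := Nat.card_pos.ne'
  have hI0 : C.index ≠ 0 := by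
    intro h; rw [h, zero_mul] at hmul; exact hG0 hmul.symm
  have hC0 : Nat.card C ≠ 0 := by
    intro h; rw [h, mul_zero] at hmul; exact hG0 hmul.symm
  have hfact : (Nat.card G).factorization p
      = (C.index).factorization p + (Nat.card C).factorization p := by
    rw [← hmul, Nat.factorization_mul hI0 hC0, Finsupp.add_apply]
  refine (hp.pow_dvd_iff_le_factorization hI0).mpr ?_
  omega

-- The key theorem for prime powers at full valuation, by strong induction on |G|.
private theorem frob_PPaux : ∀ (N : ℕ) (G : Type u) [Group G] [Fintype G] [DecidableEq G],
    Fintype.card G ≤ N → ∀ p : ℕ, p.Prime →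
    p ^ ((Fintype.card G).factorization p)
      ∣ (univ.filter fun x : G => x ^ p ^ ((Fintype.card G).factorization p) = 1).card := by
  intro N
  induction N with
  | zero =>
    intro G _ _ _ hN p hp
    exact absurd (lt_of_lt_of_le Fintype.card_pos hN) (by simp)
  | succ N ih =>
    intro G _ _ _ hN p hp
    classical
    by_cases hs0 : (Fintype.card G).factorization p = 0
    · rw [hs0]
      simp
    · set n := Fintype.card G with hn
      set s := n.factorization p with hs
      set m := n / p ^ s with hm
      have hn0 : n ≠ 0 := Fintype.card_ne_zero
      have hcop : Nat.Coprime (p ^ s) m := (Nat.coprime_ordCompl hp hn0).pow_left _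
      have hpm : p ^ s * m = n := Nat.ordProj_mul_ordCompl_eq_self n p
      have hE1 : n = ∑ y ∈ univ.filter (fun y : G => y ^ m = 1),
          (univ.filter fun u : G => u * y = y * u ∧ u ^ p ^ s = 1).card := by
        have h := frob_card_decomp (G := G) (p ^ s) m hcop
        rw [hpm] at h
        rw [← h]
        have huniv : (univ.filter fun x : G => x ^ n = 1) = univ := by
          ext x
          simp only [mem_filter, mem_univ, true_and, iff_true]
          rw [hn]
          exact pow_card_eq_one
        rw [huniv, card_univ]
      set R := univ.filter (fun y : G => y ^ m = 1) with hR
      rw [← Finset.sum_filter_add_sum_filter_not R (fun y => y ∈ Subgroup.center G)] at hE1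
      set F := (univ.filter fun u : G => u ^ p ^ s = 1).card with hF
      set t := (R.filter (fun y => y ∈ Subgroup.center G)).card with ht
      have hcent : ∑ y ∈ R.filter (fun y => y ∈ Subgroup.center G),
          (univ.filter fun u : G => u * y = y * u ∧ u ^ p ^ s = 1).card = t * F := by
        rw [Finset.sum_congr rfl (fun y hy => ?_), Finset.sum_const, smul_eq_mul]
        have hyc : y ∈ Subgroup.center G := (mem_filter.mp hy).2
        congr 1
        ext u
        simp only [mem_filter, mem_univ, true_and, and_iff_right_iff_imp]
        intro _
        exact (Subgroup.mem_center_iff.mp hyc u)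
      -- noncentral sum is divisible by p^s
      have hnc : p ^ s ∣ ∑ y ∈ R.filter (fun y => ¬ y ∈ Subgroup.center G),
          (univ.filter fun u : G => u * y = y * u ∧ u ^ p ^ s = 1).card := by
        apply frob_dvd_sum_orbits (p ^ s)
          (fun y => (univ.filter fun u : G => u * y = y * u ∧ u ^ p ^ s = 1).card)
          (fun g y => frob_card_comm_conj g y (p ^ s))
        · -- conjugation-closedness
          intro g y hy
          rw [mem_filter] at hy ⊢
          obtain ⟨hyR, hyc⟩ := hy
          constructor
          · rw [hR, mem_filter] at hyR ⊢
            refine ⟨mem_univ _, ?_⟩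
            rw [frob_conj_pow, hyR.2, mul_one, mul_inv_cancel]
          · intro hcon
            apply hyc
            have : g⁻¹ * (g * y * g⁻¹) * g⁻¹⁻¹ = y := by group
            rw [← this]
            rw [Subgroup.mem_center_iff] at hcon ⊢
            intro b
            calc b * (g⁻¹ * (g * y * g⁻¹) * g⁻¹⁻¹)
                = g⁻¹ * ((g * b * g⁻¹) * (g * y * g⁻¹)) * g⁻¹⁻¹ := by group
              _ = g⁻¹ * ((g * y * g⁻¹) * (g * b * g⁻¹)) * g⁻¹⁻¹ := by rw [hcon]
              _ = g⁻¹ * (g * y * g⁻¹) * g⁻¹⁻¹ * b := by group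
        · -- divisibility term by term
          intro y hy
          have hync : ¬ y ∈ Subgroup.center G := (mem_filter.mp hy).2
          set C := Subgroup.centralizer ({y} : Set G) with hC
          -- the centralizer is a proper subgroup
          obtain ⟨g₀, hg₀⟩ : ∃ g₀ : G, ¬ g₀ * y = y * g₀ := by
            by_contra hcon
            push_neg at hcon
            exact hync (Subgroup.mem_center_iff.mpr hcon)
          have hg₀C : ¬ g₀ ∈ C := by
            intro hmem
            exact hg₀ ((Subgroup.mem_centralizer_iff.mp hmem y rfl).symm)
          have hlt : Fintype.card ↥C < n := by
            rw [hn]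
            exact Fintype.card_subtype_lt (p := fun u => u ∈ C) hg₀C
          -- apply the inductive hypothesis to the centralizer
          have hihC := ih ↥C (by omega) p hp
          set v := (Fintype.card ↥C).factorization p with hv
          have hred := frob_PP_reduce (G := ↥C) hp (min_le_right s v)
            (dvd_trans (pow_dvd_pow p (min_le_right s v)) hihC)
          -- rewrite f y through the subgroup and the cap
          have hfy : (univ.filter fun u : G => u * y = y * u ∧ u ^ p ^ s = 1).card
              = (univ.filter fun u : ↥C => u ^ p ^ (min s v) = 1).card := by
            rw [frob_card_comm_subgroup y (p ^ s), frob_ncard_filter, frob_filter_cap hp s]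
          rw [hfy]
          -- index valuation
          have hα : s ≤ (Nat.card G).factorization p := by
            rw [Nat.card_eq_fintype_card, ← hn, ← hs]
          have hidx := frob_index_pow_dvd hp C s hα
          rw [Nat.card_eq_fintype_card] at hidx
          have hsplit : p ^ s = p ^ (s - min s v) * p ^ (min s v) := by
            rw [← pow_add]
            congr 1
            omega
          rw [hsplit]
          exact mul_dvd_mul hidx hred
      -- conclude
      have hps_n : p ^ s ∣ n := by
        rw [hs, hn]
        exact Nat.ordProj_dvd _ _
      rw [hcent] at hE1
      have htF : p ^ s ∣ t * F := by
        rw [hE1] at hps_n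
        exact (Nat.dvd_add_right hnc).mp (by rwa [Nat.add_comm] at hps_n)
      -- p does not divide t
      have hpt : ¬ p ∣ t := by
        intro hdvd
        -- K : the subgroup of central m-torsion elements
        set K : Subgroup G :=
          { carrier := {y : G | y ^ m = 1 ∧ y ∈ Subgroup.center G}
            one_mem' := ⟨one_pow m, Subgroup.one_mem _⟩
            mul_mem' := by
              intro c d hc hd
              refine ⟨?_, Subgroup.mul_mem _ hc.2 hd.2⟩
              have hcomm : Commute c d := (Subgroup.mem_center_iff.mp hc.2 d).symm
              rw [hcomm.mul_pow, hc.1, hd.1, mul_one]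
            inv_mem' := by
              intro c hc
              exact ⟨by rw [inv_pow, hc.1, inv_one], Subgroup.inv_mem _ hc.2⟩ } with hK
        have htK : t = Fintype.card ↥K := by
          rw [ht, hR, Finset.filter_filter, ← Fintype.card_subtype]
          apply Fintype.card_congr
          exact Equiv.subtypeEquivRight (fun y => Iff.rfl)
        haveI : Fact p.Prime := ⟨hp⟩
        obtain ⟨x, hx⟩ := exists_prime_orderOf_dvd_card (G := ↥K) p (by rwa [← htK])
        have hxG : orderOf (x : G) = p := by
          rw [← hx]
          exact orderOf_injective K.subtype (Subgroup.subtype_injective K) x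
        have hxm : (x : G) ^ m = 1 := x.2.1
        have hpm' : p ∣ m := by
          rw [← hxG]
          exact orderOf_dvd_iff_pow_eq_one.mpr hxm
        exact Nat.not_dvd_ordCompl hp hn0 hpm'
      have hcop2 : Nat.Coprime (p ^ s) t :=
        Nat.Coprime.pow_left s ((Nat.Prime.coprime_iff_not_dvd hp).mpr hpt)
      exact hcop2.dvd_of_dvd_mul_left htF

-- Frobenius for prime powers
private theorem frob_PPfin (G : Type u) [Group G] [Fintype G] [DecidableEq G]
    {p : ℕ} (hp : p.Prime) {a : ℕ} (ha : p ^ a ∣ Fintype.card G) :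
    p ^ a ∣ (univ.filter fun x : G => x ^ p ^ a = 1).card := by
  have hsa : a ≤ (Fintype.card G).factorization p :=
    (hp.pow_dvd_iff_le_factorization Fintype.card_ne_zero).mp ha
  refine frob_PP_reduce hp hsa ?_
  exact dvd_trans (pow_dvd_pow p hsa) (frob_PPaux (Fintype.card G) G le_rfl p hp)

-- Frobenius' theorem, Fintype version
private theorem frob_main (G : Type u) [Group G] [Fintype G] [DecidableEq G]
    (k : ℕ) (hk : 0 < k) (hdvd : k ∣ Fintype.card G) :
    k ∣ (univ.filter fun x : G => x ^ k = 1).card := by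
  classical
  have hF0 : (univ.filter fun x : G => x ^ k = 1).card ≠ 0 := by
    have h1 : (1 : G) ∈ univ.filter (fun x : G => x ^ k = 1) :=
      mem_filter.mpr ⟨mem_univ _, one_pow k⟩
    exact (Finset.card_pos.mpr ⟨1, h1⟩).ne'
  rw [← Nat.factorization_le_iff_dvd hk.ne' hF0, Finsupp.le_def]
  intro p
  by_cases hp : p.Prime
  swap
  · simp [Nat.factorization_eq_zero_of_not_prime _ hp]
  set α := k.factorization p with hα
  suffices h : p ^ α ∣ (univ.filter fun x : G => x ^ k = 1).card by
    exact (hp.pow_dvd_iff_le_factorization hF0).mp h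
  set B := k / p ^ α with hB
  have hk_eq : p ^ α * B = k := Nat.ordProj_mul_ordCompl_eq_self k p
  have hcop : Nat.Coprime (p ^ α) B := (Nat.coprime_ordCompl hp hk.ne').pow_left _
  have hd := frob_card_decomp (G := G) (p ^ α) B hcop
  rw [hk_eq] at hd
  rw [hd]
  apply frob_dvd_sum_orbits (p ^ α)
    (fun y => (univ.filter fun u : G => u * y = y * u ∧ u ^ p ^ α = 1).card)
    (fun g y => frob_card_comm_conj g y (p ^ α))
  · -- conjugation-closedness of {y : y^B = 1}
    intro g y hy
    rw [mem_filter] at hy ⊢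
    refine ⟨mem_univ _, ?_⟩
    rw [frob_conj_pow, hy.2, mul_one, mul_inv_cancel]
  · -- term-by-term divisibility
    intro y _
    set C := Subgroup.centralizer ({y} : Set G) with hC
    set v := (Fintype.card ↥C).factorization p with hv
    have hfy : (univ.filter fun u : G => u * y = y * u ∧ u ^ p ^ α = 1).card
        = (univ.filter fun u : ↥C => u ^ p ^ (min α v) = 1).card := by
      rw [frob_card_comm_subgroup y (p ^ α), frob_ncard_filter, frob_filter_cap hp α]
    rw [hfy]
    have hsub : p ^ (min α v) ∣ (univ.filter fun u : ↥C => u ^ p ^ (min α v) = 1).card := by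
      apply frob_PPfin ↥C hp
      exact dvd_trans (pow_dvd_pow p (min_le_right α v)) (hv ▸ Nat.ordProj_dvd _ _)
    have hαle : α ≤ (Nat.card G).factorization p := by
      have := (Nat.factorization_le_iff_dvd hk.ne' (Nat.card_pos (α := G)).ne').mpr
        (by rwa [Nat.card_eq_fintype_card])
      exact hα ▸ this p
    have hidx := frob_index_pow_dvd hp C α hαle
    rw [Nat.card_eq_fintype_card] at hidx
    have hsplit : p ^ α = p ^ (α - min α v) * p ^ (min α v) := by
      rw [← pow_add]
      congr 1
      omega
    rw [hsplit]
    exact mul_dvd_mul hidx hsub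

/-- Frobenius' theorem: for any finite group `G` and any divisor `k` of `|G|`,
the number of solutions of `x ^ k = 1` in `G` is divisible by `k`. -/
theorem frobenius_divisibility (G : Type*) [Group G] [Finite G]
    (k : ℕ) (hk : 0 < k) (hdvd : k ∣ Nat.card G) :
    k ∣ Nat.card {x : G // x ^ k = 1} := by
  classical
  cases nonempty_fintype G
  rw [frob_ncard_filter]
  apply frob_main G k hk
  rwa [Nat.card_eq_fintype_card] at hdvd
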